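/- Let N ≥ 2 and assume p is strictly increasing on (0,∞). Then no incentive function makes the mechanism budget balanced: there is no function h : (0,∞) → ℝ such that Σ_i I_i(q) = 0 for every profile q ≥ 0 with ‖q‖ > 0, where I_i(q) = ‖q_{-i}‖·(h(‖q_{-i}‖) − p(‖q‖)) and a term with ‖q_{-i}‖ = 0 is read as 0. Equivalently, there is no h for which the payments o_i(q) = q_i·p(‖q‖) + I_i(q) satisfy Σ_i o_i(q) = C(‖q‖) for every such profile q. -/
import Mathlib

open Finset Set

lemma no_incentive_h (N : ℕ) (hN : 2 ≤ N) (p : ℝ → ℝ)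
    (hp_smono : StrictMonoOn p (Set.Ioi (0 : ℝ))) :
    ¬ ∃ h : ℝ → ℝ, ∀ q : Fin N → ℝ, (∀ i, 0 ≤ q i) → 0 < ∑ i, q i →
        ∑ i, ((∑ j, q j) - q i) * (h ((∑ j, q j) - q i) - p (∑ j, q j)) = 0 := by
  rintro ⟨h, hh⟩
  set i0 : Fin N := ⟨0, by omega⟩
  set i1 : Fin N := ⟨1, by omega⟩
  have hne : i0 ≠ i1 := by
    intro he
    simpa [i0, i1] using congrArg Fin.val he
  have hne' : i1 ≠ i0 := hne.symm
  -- Step 1: h t = p t for t > 0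
  have hstep1 : ∀ t : ℝ, 0 < t → h t = p t := by
    intro t ht
    set q : Fin N → ℝ := fun i => if i = i0 then t else 0 with hq
    have hS : ∑ j, q j = t := by simp [hq]
    have h0 := hh q (fun i => by by_cases hi : i = i0 <;> simp [hq, hi, ht.le]) (by rw [hS]; exact ht)
    rw [hS] at h0
    set c : ℝ := t * (h t - p t) with hc
    have hterm : ∀ i : Fin N, (t - q i) * (h (t - q i) - p t) = (if i = i0 then 0 else c) := by
      intro i
      by_cases hi : i = i0 <;> simp [hq, hi, hc]
    rw [Finset.sum_congr rfl (fun i _ => hterm i)] at h0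
    have h1 : ∑ i : Fin N, (if i = i0 then (0:ℝ) else c) = N * c - c := by
      have he : ∀ i : Fin N, (if i = i0 then (0:ℝ) else c) = c - (if i = i0 then c else 0) := by
        intro i; by_cases hi : i = i0 <;> simp [hi]
      rw [Finset.sum_congr rfl (fun i _ => he i), Finset.sum_sub_distrib]
      simp [mul_comm]
    rw [h1] at h0
    have hN' : (2:ℝ) ≤ N := by exact_mod_cast hN
    have hc0 : c = 0 := by
      by_contra hcne
      have h' : ((N:ℝ) - 1) * c = 0 := by linarith
      rcases mul_eq_zero.mp h' with h' | h'
      · linarith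
      · exact hcne h'
    rcases mul_eq_zero.mp hc0 with h' | h'
    · linarith
    · linarith
  -- Step 2: two-consumer profile
  set q : Fin N → ℝ := fun i => (if i = i0 then (1:ℝ) else 0) + (if i = i1 then 1 else 0) with hq
  have hS : ∑ j, q j = 2 := by
    simp [hq, Finset.sum_add_distrib]
    norm_num
  have hqnn : ∀ i, 0 ≤ q i := by
    intro i
    have : (0:ℝ) ≤ (if i = i0 then (1:ℝ) else 0) := by split <;> norm_num
    have : (0:ℝ) ≤ (if i = i1 then (1:ℝ) else 0) := by split <;> norm_num
    simp only [hq]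
    positivity
  have h0 := hh q hqnn (by rw [hS]; norm_num)
  rw [hS] at h0
  have h2 : h 2 = p 2 := hstep1 2 (by norm_num)
  set d : ℝ := h 1 - p 2 with hd
  have hterm : ∀ i : Fin N, (2 - q i) * (h (2 - q i) - p 2)
      = (if i = i0 then d else 0) + (if i = i1 then d else 0) := by
    intro i
    by_cases hi0 : i = i0
    · simp [hq, hi0, hne, hd]; norm_num
    · by_cases hi1 : i = i1
      · simp [hq, hi0, hi1, hne', hd]; norm_num
      · simp [hq, hi0, hi1, h2]
  rw [Finset.sum_congr rfl (fun i _ => hterm i), Finset.sum_add_distrib] at h0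
  simp [hne'] at h0
  have h1eq : h 1 = p 1 := hstep1 1 (by norm_num)
  have hpp : p 1 = p 2 := by rw [← h1eq]; simp [hd] at h0 ⊢; linarith
  have hlt : p 1 < p 2 :=
    hp_smono (by norm_num : (1:ℝ) ∈ Set.Ioi 0) (by norm_num : (2:ℝ) ∈ Set.Ioi 0) (by norm_num)
  linarith

/-- For `N ≥ 2` and a strictly increasing average-cost price,
no incentive function `h` makes the mechanism budget balanced: there is no
`h` with `Σ_i I_i(q) = 0` for every profile `q ≥ 0` with `‖q‖ > 0`, where
`I_i(q) = ‖q_{-i}‖·(h(‖q_{-i}‖) − p(‖q‖))`; equivalently, no `h` makes the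
payments `o_i(q) = q_i·p(‖q‖) + I_i(q)` satisfy `Σ_i o_i(q) = C(‖q‖)`. -/
theorem statement_4
    (N : ℕ) (hN : 2 ≤ N) (C p : ℝ → ℝ)
    (hC_diff : DifferentiableOn ℝ C (Ici (0 : ℝ)))
    (hC_sconvex : StrictConvexOn ℝ (Ici (0 : ℝ)) C)
    (hC0 : C 0 = 0)
    (hCpos : ∀ g : ℝ, 0 < g → 0 < C g)
    (hp : ∀ g : ℝ, 0 < g → p g = C g / g)
    (hp_smono : StrictMonoOn p (Ioi (0 : ℝ))) :
    (¬ ∃ h : ℝ → ℝ, ∀ q : Fin N → ℝ, (∀ i, 0 ≤ q i) → 0 < ∑ i, q i →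
        ∑ i, ((∑ j, q j) - q i) * (h ((∑ j, q j) - q i) - p (∑ j, q j)) = 0) ∧
    (¬ ∃ h : ℝ → ℝ, ∀ q : Fin N → ℝ, (∀ i, 0 ≤ q i) → 0 < ∑ i, q i →
        ∑ i, (q i * p (∑ j, q j) +
          ((∑ j, q j) - q i) * (h ((∑ j, q j) - q i) - p (∑ j, q j)))
          = C (∑ j, q j)) := by
  refine ⟨no_incentive_h N hN p hp_smono, ?_⟩
  rintro ⟨h, hh⟩
  refine no_incentive_h N hN p hp_smono ⟨h, fun q hq hS => ?_⟩
  have h0 := hh q hq hS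
  rw [Finset.sum_add_distrib, ← Finset.sum_mul] at h0
  have hC : (∑ i, q i) * p (∑ j, q j) = C (∑ j, q j) := by
    rw [hp _ hS]
    field_simp
  rw [hC] at h0
  linarith
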